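/- Let f[z₁,z₂,z₃] = [iz₁,iz₂,-z₃] and κ'[z₁,z₂,z₃] = [z̄₁,z̄₂,z̄₃] on T^6 = (ℂ/(ℤ+ℤi))³. Then the fixed point set of f⁻¹∘κ' is exactly the set of points [x₁ - ix₁, x₂ - ix₂, ε₃ + iy₃] with ε₃ ∈ {0, 1/2} and x₁, x₂, y₃ ∈ ℝ; in particular it is a disjoint union of two 3-tori. -/

import Mathlib

noncomputable section

open Complex

/-- The Gaussian lattice Γ = ℤ⟨1, i⟩ in ℂ. -/
def GammaLat : AddSubgroup ℂ := AddSubgroup.closure {1, Complex.I}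

/-- The complex torus ℂ/Γ. -/
abbrev CTorus := ℂ ⧸ GammaLat

/-- T⁶ = (ℂ/Γ)³. -/
abbrev T6 := Fin 3 → CTorus

/-- The projection ℂ³ → T⁶. -/
def pr6 : (Fin 3 → ℂ) → T6 := fun z i => QuotientAddGroup.mk (z i)

/-- The lift of f to ℂ³ : (z₁,z₂,z₃) ↦ (iz₁, iz₂, -z₃). -/
def fC : (Fin 3 → ℂ) → (Fin 3 → ℂ) := fun z => ![Complex.I * z 0, Complex.I * z 1, -(z 2)]

/-- The lift of f⁻¹∘κ' to ℂ³ : z ↦ (-i z̄₁, -i z̄₂, -z̄₃). -/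
def finvKappaC : (Fin 3 → ℂ) → (Fin 3 → ℂ) := fun z =>
  ![-Complex.I * (starRingEnd ℂ) (z 0), -Complex.I * (starRingEnd ℂ) (z 1),
    -(starRingEnd ℂ) (z 2)]

lemma mem_gamma_iff (w : ℂ) : w ∈ GammaLat ↔ ∃ m n : ℤ, w = m + n * Complex.I := by
  constructor
  · intro h
    induction h using AddSubgroup.closure_induction with
    | mem x hx =>
      rcases hx with rfl | rfl
      · exact ⟨1, 0, by simp⟩
      · exact ⟨0, 1, by simp⟩
    | zero => exact ⟨0, 0, by simp⟩
    | add a b _ _ ha hb =>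
      obtain ⟨m, n, rfl⟩ := ha; obtain ⟨m', n', rfl⟩ := hb
      exact ⟨m + m', n + n', by push_cast; ring⟩
    | neg a _ ha =>
      obtain ⟨m, n, rfl⟩ := ha
      exact ⟨-m, -n, by push_cast; ring⟩
  · rintro ⟨m, n, rfl⟩
    have h1 : (1 : ℂ) ∈ GammaLat := AddSubgroup.subset_closure (by simp)
    have hI : Complex.I ∈ GammaLat := AddSubgroup.subset_closure (by simp)
    simpa [zsmul_eq_mul] using add_mem (zsmul_mem h1 m) (zsmul_mem hI n)

lemma mk_eq_mk (a b : ℂ) :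
    (QuotientAddGroup.mk a : CTorus) = QuotientAddGroup.mk b ↔
      ∃ m n : ℤ, -a + b = m + n * Complex.I := by
  rw [QuotientAddGroup.eq, mem_gamma_iff]

lemma funext3 (u v : T6) (h0 : u 0 = v 0) (h1 : u 1 = v 1) (h2 : u 2 = v 2) : u = v := by
  funext i
  fin_cases i
  · exact h0
  · exact h1
  · exact h2

/-- The fixed point set of f⁻¹∘κ' on T⁶ is exactly the set of points
[x₁ - ix₁, x₂ - ix₂, ε₃ + iy₃] with ε₃ ∈ {0, 1/2} and x₁, x₂, y₃ ∈ ℝ; moreover the two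
pieces (ε₃ = 0 and ε₃ = 1/2) are disjoint, so the fixed set is a disjoint union of two
3-tori. -/
theorem stmt2 (g : T6 → T6)
    (hg : ∀ z : Fin 3 → ℂ, g (pr6 z) = pr6 (finvKappaC z)) :
    ({p : T6 | g p = p} =
      {p : T6 | ∃ x₁ x₂ y₃ ε₃ : ℝ, (ε₃ = 0 ∨ ε₃ = 1/2) ∧
        p = pr6 ![(x₁ : ℂ) - (x₁ : ℂ) * Complex.I, (x₂ : ℂ) - (x₂ : ℂ) * Complex.I,
          (ε₃ : ℂ) + (y₃ : ℂ) * Complex.I]}) ∧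
    (∀ x₁ x₂ y₃ x₁' x₂' y₃' : ℝ,
      pr6 ![(x₁ : ℂ) - (x₁ : ℂ) * Complex.I, (x₂ : ℂ) - (x₂ : ℂ) * Complex.I,
        (y₃ : ℂ) * Complex.I] ≠
      pr6 ![(x₁' : ℂ) - (x₁' : ℂ) * Complex.I, (x₂' : ℂ) - (x₂' : ℂ) * Complex.I,
        (1/2 : ℂ) + (y₃' : ℂ) * Complex.I]) := by
  constructor
  · ext p
    simp only [Set.mem_setOf_eq]
    constructor
    · intro hp
      obtain ⟨z, rfl⟩ : ∃ z, p = pr6 z :=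
        ⟨fun i => (p i).out, funext fun i => ((p i).out_eq).symm⟩
      rw [hg] at hp
      have h0 := congrFun hp 0
      have h1 := congrFun hp 1
      have h2 := congrFun hp 2
      simp only [pr6, finvKappaC, Matrix.cons_val_zero, Matrix.cons_val_one, Matrix.head_cons,
        Matrix.cons_val_two, Matrix.tail_cons] at h0 h1 h2
      rw [mk_eq_mk] at h0 h1 h2
      obtain ⟨m₀, n₀, e0⟩ := h0
      obtain ⟨m₁, n₁, e1⟩ := h1
      obtain ⟨m₂, n₂, e2⟩ := h2
      rw [Complex.ext_iff] at e0 e1 e2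
      simp at e0 e1 e2
      have E0 : pr6 z 0 =
          QuotientAddGroup.mk (((z 0).re : ℂ) - ((z 0).re : ℂ) * Complex.I) := by
        rw [pr6, mk_eq_mk]
        refine ⟨0, -m₀, ?_⟩
        rw [Complex.ext_iff]
        constructor <;> simp <;> push_cast <;> linarith [e0.1, e0.2]
      have E1 : pr6 z 1 =
          QuotientAddGroup.mk (((z 1).re : ℂ) - ((z 1).re : ℂ) * Complex.I) := by
        rw [pr6, mk_eq_mk]
        refine ⟨0, -m₁, ?_⟩
        rw [Complex.ext_iff]
        constructor <;> simp <;> push_cast <;> linarith [e1.1, e1.2]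
      rcases Int.even_or_odd m₂ with ⟨k, hk⟩ | ⟨k, hk⟩
      · refine ⟨(z 0).re, (z 1).re, (z 2).im, 0, Or.inl rfl, ?_⟩
        refine funext3 _ _ ?_ ?_ ?_
        · rw [E0]; simp [pr6]
        · rw [E1]; simp [pr6]
        · simp only [pr6, Matrix.cons_val_two, Matrix.tail_cons, Matrix.head_cons]
          rw [mk_eq_mk]
          refine ⟨-k, 0, ?_⟩
          have hm : (m₂ : ℝ) = k + k := by exact_mod_cast congrArg (Int.cast : ℤ → ℝ) hk
          rw [Complex.ext_iff]
          constructor <;> simp <;> push_cast <;> linarith [e2.1, e2.2]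
      · refine ⟨(z 0).re, (z 1).re, (z 2).im, 1/2, Or.inr rfl, ?_⟩
        refine funext3 _ _ ?_ ?_ ?_
        · rw [E0]; simp [pr6]
        · rw [E1]; simp [pr6]
        · simp only [pr6, Matrix.cons_val_two, Matrix.tail_cons, Matrix.head_cons]
          rw [mk_eq_mk]
          refine ⟨-k, 0, ?_⟩
          have hm : (m₂ : ℝ) = 2 * k + 1 := by exact_mod_cast congrArg (Int.cast : ℤ → ℝ) hk
          rw [Complex.ext_iff]
          constructor <;> simp <;> push_cast <;> linarith [e2.1, e2.2]
    · rintro ⟨x₁, x₂, y₃, ε₃, hε, rfl⟩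
      rw [hg]
      refine funext3 _ _ ?_ ?_ ?_
      · simp only [pr6, finvKappaC, Matrix.cons_val_zero]
        rw [mk_eq_mk]
        refine ⟨0, 0, ?_⟩
        simp [Complex.ext_iff]
      · simp only [pr6, finvKappaC, Matrix.cons_val_one, Matrix.head_cons]
        rw [mk_eq_mk]
        refine ⟨0, 0, ?_⟩
        simp [Complex.ext_iff]
      · simp only [pr6, finvKappaC, Matrix.cons_val_two, Matrix.tail_cons, Matrix.head_cons]
        rw [mk_eq_mk]
        rcases hε with rfl | rfl
        · refine ⟨0, 0, ?_⟩
          simp [Complex.ext_iff]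
        · refine ⟨1, 0, ?_⟩
          rw [Complex.ext_iff]
          constructor <;> simp <;> norm_num
  · intro x₁ x₂ y₃ x₁' x₂' y₃' h
    have h2 := congrFun h 2
    simp only [pr6, Matrix.cons_val_two, Matrix.tail_cons, Matrix.head_cons] at h2
    rw [mk_eq_mk] at h2
    obtain ⟨m, n, e⟩ := h2
    have hre : (1/2 : ℝ) = m := by
      have := congrArg Complex.re e
      simpa using this
    have h1 : ((2 * m : ℤ) : ℝ) = 1 := by push_cast; linarith
    have h2 : (2 * m : ℤ) = 1 := by exact_mod_cast h1
    omega
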